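/- Let Δ ⊂ ℝ^n be an n-dimensional convex lattice polytope contained in the positive orthant. Then the moment map μ_Δ : (ℝ_{>0})^n → Int(Δ), defined by μ_Δ(x) = (Σ_{i∈Δ∩ℤ^n} x^i · i) / (Σ_{i∈Δ∩ℤ^n} x^i), takes values in the interior of Δ. -/

import Mathlib

/-- A convex combination with strictly positive weights over all points of a finite set
lies in the interior of the convex hull, provided the interior is nonempty. -/
lemma pos_combo_mem_interior {n : ℕ} (S : Finset (Fin n → ℝ)) (hS : S.Nonempty)
    (w : (Fin n → ℝ) → ℝ) (hw : ∀ p ∈ S, 0 < w p) (hsum : ∑ p ∈ S, w p = 1)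
    (hne : (interior (convexHull ℝ (S : Set (Fin n → ℝ)))).Nonempty) :
    ∑ p ∈ S, w p • p ∈ interior (convexHull ℝ (S : Set (Fin n → ℝ))) := by
  obtain ⟨y, hy⟩ := hne
  have hyhull : y ∈ convexHull ℝ (S : Set (Fin n → ℝ)) := interior_subset hy
  rw [Finset.convexHull_eq] at hyhull
  obtain ⟨c, hc0, hc1, hcy⟩ := hyhull
  -- each c p ≤ 1
  have hc_le : ∀ p ∈ S, c p ≤ 1 := by
    intro p hp
    calc c p ≤ ∑ q ∈ S, c q := Finset.single_le_sum hc0 hp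
    _ = 1 := hc1
  -- choose t
  set t0 : ℝ := S.inf' hS w with ht0def
  have ht0pos : 0 < t0 := by
    rw [ht0def, Finset.lt_inf'_iff]
    exact fun p hp => hw p hp
  set t : ℝ := min t0 (1/2) with htdef
  have htpos : 0 < t := lt_min ht0pos (by norm_num)
  have htlt1 : t < 1 := lt_of_le_of_lt (min_le_right _ _) (by norm_num)
  have ht_le : ∀ p ∈ S, t * c p ≤ w p := by
    intro p hp
    have h1 : t ≤ w p := le_trans (min_le_left _ _) (Finset.inf'_le _ hp)
    calc t * c p ≤ t * 1 := by
          exact mul_le_mul_of_nonneg_left (hc_le p hp) htpos.le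
      _ = t := mul_one t
      _ ≤ w p := h1
  have h1t : (0:ℝ) < 1 - t := by linarith
  -- define residual weights
  set u : (Fin n → ℝ) → ℝ := fun p => (w p - t * c p) / (1 - t) with hudef
  have hu0 : ∀ p ∈ S, 0 ≤ u p := fun p hp =>
    div_nonneg (by linarith [ht_le p hp]) h1t.le
  have husum : ∑ p ∈ S, u p = 1 := by
    rw [hudef]
    simp only []
    rw [← Finset.sum_div, Finset.sum_sub_distrib, ← Finset.mul_sum, hsum, hc1]
    field_simp
  set z : Fin n → ℝ := ∑ p ∈ S, u p • p with hzdef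
  have hz : z ∈ convexHull ℝ (S : Set (Fin n → ℝ)) := by
    rw [Finset.convexHull_eq]
    refine ⟨u, hu0, husum, ?_⟩
    rw [Finset.centerMass, husum, inv_one, one_smul]
    simp [hzdef]
  have key : ∑ p ∈ S, w p • p = t • y + (1 - t) • z := by
    rw [← hcy, Finset.centerMass, hc1, inv_one, one_smul, hzdef,
      Finset.smul_sum, Finset.smul_sum, ← Finset.sum_add_distrib]
    refine Finset.sum_congr rfl fun p hp => ?_
    simp only [id]
    rw [smul_smul, smul_smul, ← add_smul]
    congr 1
    rw [hudef]
    field_simp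
    ring
  rw [key]
  exact (convex_convexHull ℝ _).combo_interior_closure_mem_interior hy
    (subset_closure hz) htpos (by linarith) (by ring)

/-- The moment map of an `n`-dimensional convex lattice polytope contained in the
positive orthant takes values in the interior of the polytope.  The polytope is
given as the convex hull of its (finite) set `S` of lattice points. -/
theorem moment_map_mem_interior {n : ℕ} (S : Finset (Fin n → ℝ)) (hS : S.Nonempty)
    (hlat : ∀ p ∈ S, ∀ j, ∃ m : ℤ, p j = (m : ℝ))
    (hpos : ∀ p ∈ S, ∀ j, 0 < p j)
    (hdim : (interior (convexHull ℝ (S : Set (Fin n → ℝ)))).Nonempty)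
    (x : Fin n → ℝ) (hx : ∀ j, 0 < x j) :
    (∑ p ∈ S, ∏ j, x j ^ p j)⁻¹ • ∑ p ∈ S, (∏ j, x j ^ p j) • p ∈
      interior (convexHull ℝ (S : Set (Fin n → ℝ))) := by
  set W : (Fin n → ℝ) → ℝ := fun p => ∏ j, x j ^ p j with hWdef
  have hWpos : ∀ p ∈ S, 0 < W p := fun p _ =>
    Finset.prod_pos fun j _ => Real.rpow_pos_of_pos (hx j) _
  set T : ℝ := ∑ p ∈ S, W p with hTdef
  have hTpos : 0 < T := Finset.sum_pos hWpos hS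
  have heq : T⁻¹ • ∑ p ∈ S, W p • p = ∑ p ∈ S, (T⁻¹ * W p) • p := by
    rw [Finset.smul_sum]
    exact Finset.sum_congr rfl fun p _ => smul_smul _ _ _
  have := pos_combo_mem_interior S hS (fun p => T⁻¹ * W p)
    (fun p hp => mul_pos (inv_pos.mpr hTpos) (hWpos p hp))
    (by rw [← Finset.mul_sum, ← hTdef, inv_mul_cancel₀ hTpos.ne']) hdim
  rw [heq]
  exact this
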